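/- arXiv:1608.00088 — 3 statements merged into one kernel-verified Lean document; each statement's English description precedes it below -/
import Mathlib

section
/- Let x̄₁ and x̄₂ be sample means of independent iid samples of sizes n₁, n₂ from populations with means μ₁, μ₂ and covariances Σ₁, Σ₂, and let x₀ be a new observation independent of both samples with E[x₀] = μ₁ and Cov(x₀) = Σ₁. Then E[(x̄₁ − x̄₂)′x₀ − ½(x̄₁′x̄₁ − x̄₂′x̄₂)] = ½‖μ₁ − μ₂‖² − B, where B = tr(Σ₁)/(2n₁) − tr(Σ₂)/(2n₂). -/
open MeasureTheory ProbabilityTheory Matrix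

open Filter
section Helpers

variable {Ω : Type*} [MeasureSpace Ω] [IsProbabilityMeasure (volume : Measure Ω)] {p : ℕ}

lemma comp_memLp {f : Ω → Fin p → ℝ} (hf : MemLp f 2) (hm : Measurable f) (s : Fin p) :
    MemLp (fun ω => f ω s) 2 := by
  refine hf.of_le ((measurable_pi_apply s).comp hm).aestronglyMeasurable ?_
  exact Filter.Eventually.of_forall fun ω => norm_le_pi_norm (f ω) s

lemma mul_integrable {f g : Ω → ℝ} (hf : MemLp f 2) (hg : MemLp g 2) :
    Integrable (fun ω => f ω * g ω) := by
  have h : MemLp (f • g) 1 := hg.smul hf (hpqr := ⟨by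
    simp; exact ENNReal.inv_two_add_inv_two⟩)
  exact memLp_one_iff_integrable.mp h

lemma second_moment {X : Ω → Fin p → ℝ} {μv : Fin p → ℝ} {S : Matrix (Fin p) (Fin p) ℝ}
    (hm : Measurable X) (hL2 : MemLp X 2)
    (hmean : ∀ s, ∫ ω, X ω s = μv s)
    (hcov : ∀ s t, ∫ ω, (X ω s - μv s) * (X ω t - μv t) = S s t)
    (s t : Fin p) : ∫ ω, X ω s * X ω t = S s t + μv s * μv t := by
  have hs := comp_memLp hL2 hm s
  have ht := comp_memLp hL2 hm t
  have his : Integrable (fun ω => X ω s) := hs.integrable (by norm_num)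
  have hit : Integrable (fun ω => X ω t) := ht.integrable (by norm_num)
  have hprod : Integrable (fun ω => X ω s * X ω t) := mul_integrable hs ht
  have i1 : Integrable (fun ω => X ω s * X ω t - μv s * X ω t) :=
    hprod.sub (hit.const_mul _)
  have i2 : Integrable (fun ω => X ω s * X ω t - μv s * X ω t - μv t * X ω s) :=
    i1.sub (his.const_mul _)
  have key : (∫ ω, (X ω s - μv s) * (X ω t - μv t))
      = ∫ ω, (X ω s * X ω t - μv s * X ω t - μv t * X ω s + μv s * μv t) := by
    congr 1; funext ω; ring
  have h2 : (∫ ω, (X ω s * X ω t - μv s * X ω t - μv t * X ω s + μv s * μv t))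
      = (∫ ω, X ω s * X ω t) - μv s * μv t := by
    rw [integral_add i2 (integrable_const _), integral_sub i1 (his.const_mul _),
      integral_sub hprod (hit.const_mul _), integral_const_mul, integral_const_mul,
      hmean s, hmean t, integral_const]
    simp; ring
  have h3 := hcov s t
  rw [key, h2] at h3
  linarith

lemma cross_moment {X Y : Ω → Fin p → ℝ} {μX μY : Fin p → ℝ}
    (hmX : Measurable X) (hmY : Measurable Y)
    (hX : MemLp X 2) (hY : MemLp Y 2)
    (hind : IndepFun X Y)
    (hmeanX : ∀ s, ∫ ω, X ω s = μX s) (hmeanY : ∀ s, ∫ ω, Y ω s = μY s)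
    (s t : Fin p) : ∫ ω, X ω s * Y ω t = μX s * μY t := by
  have hi : IndepFun (fun ω => X ω s) (fun ω => Y ω t) :=
    hind.comp (measurable_pi_apply s) (measurable_pi_apply t)
  have := hi.integral_mul_eq_mul_integral ((comp_memLp hX hmX s).aestronglyMeasurable)
    ((comp_memLp hY hmY t).aestronglyMeasurable)
  rw [← hmeanX s, ← hmeanY t, ← this]
  rfl

lemma dot_single {n : ℕ} (Y : Fin n → Ω → Fin p → ℝ) (W : Ω → Fin p → ℝ)
    (hmY : ∀ k, Measurable (Y k)) (hmW : Measurable W)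
    (hY : ∀ k, MemLp (Y k) 2) (hW : MemLp W 2) (c : ℝ) :
    Integrable (fun ω => (c • ∑ k, Y k ω) ⬝ᵥ W ω)
    ∧ (∫ ω, (c • ∑ k, Y k ω) ⬝ᵥ W ω) = c * ∑ s, ∑ k, ∫ ω, Y k ω s * W ω s := by
  have hint : ∀ (s : Fin p) (k : Fin n), Integrable (fun ω => c * (Y k ω s * W ω s)) :=
    fun s k => (mul_integrable (comp_memLp (hY k) (hmY k) s) (comp_memLp hW hmW s)).const_mul _
  have hfun : ∀ ω, (c • ∑ k, Y k ω) ⬝ᵥ W ω = ∑ s, ∑ k, c * (Y k ω s * W ω s) := by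
    intro ω
    simp only [dotProduct, Pi.smul_apply, smul_eq_mul, Finset.sum_apply]
    refine Finset.sum_congr rfl fun s _ => ?_
    rw [Finset.mul_sum, Finset.sum_mul]
    exact Finset.sum_congr rfl fun k _ => by ring
  have hI : Integrable (fun ω => ∑ s, ∑ k, c * (Y k ω s * W ω s)) :=
    integrable_finset_sum _ fun s _ => integrable_finset_sum _ fun k _ => hint s k
  constructor
  · exact hI.congr (Filter.Eventually.of_forall fun ω => (hfun ω).symm)
  · rw [integral_congr_ae (Filter.Eventually.of_forall hfun),
      integral_finset_sum _ fun s _ => integrable_finset_sum _ fun k _ => hint s k,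
      Finset.mul_sum]
    refine Finset.sum_congr rfl fun s _ => ?_
    rw [integral_finset_sum _ fun k _ => hint s k, Finset.mul_sum]
    exact Finset.sum_congr rfl fun k _ => (integral_const_mul c _)

lemma dot_avg {n m : ℕ} (Y : Fin n → Ω → Fin p → ℝ) (Z : Fin m → Ω → Fin p → ℝ)
    (hmY : ∀ k, Measurable (Y k)) (hmZ : ∀ l, Measurable (Z l))
    (hY : ∀ k, MemLp (Y k) 2) (hZ : ∀ l, MemLp (Z l) 2) (c d : ℝ) :
    Integrable (fun ω => (c • ∑ k, Y k ω) ⬝ᵥ (d • ∑ l, Z l ω))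
    ∧ (∫ ω, (c • ∑ k, Y k ω) ⬝ᵥ (d • ∑ l, Z l ω))
      = c * d * ∑ s, ∑ k, ∑ l, ∫ ω, Y k ω s * Z l ω s := by
  have hint : ∀ (s : Fin p) (k : Fin n) (l : Fin m),
      Integrable (fun ω => c * d * (Y k ω s * Z l ω s)) :=
    fun s k l => (mul_integrable (comp_memLp (hY k) (hmY k) s)
      (comp_memLp (hZ l) (hmZ l) s)).const_mul _
  have hfun : ∀ ω, (c • ∑ k, Y k ω) ⬝ᵥ (d • ∑ l, Z l ω)
      = ∑ s, ∑ k, ∑ l, c * d * (Y k ω s * Z l ω s) := by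
    intro ω
    simp only [dotProduct, Pi.smul_apply, smul_eq_mul, Finset.sum_apply]
    refine Finset.sum_congr rfl fun s _ => ?_
    calc (c * ∑ k, Y k ω s) * (d * ∑ l, Z l ω s)
        = c * d * ((∑ k, Y k ω s) * (∑ l, Z l ω s)) := by ring
      _ = c * d * ∑ k, ∑ l, Y k ω s * Z l ω s := by rw [Finset.sum_mul_sum]
      _ = ∑ k, ∑ l, c * d * (Y k ω s * Z l ω s) := by
          rw [Finset.mul_sum]
          exact Finset.sum_congr rfl fun k _ => by rw [Finset.mul_sum]
  have hI : Integrable (fun ω => ∑ s, ∑ k, ∑ l, c * d * (Y k ω s * Z l ω s)) :=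
    integrable_finset_sum _ fun s _ => integrable_finset_sum _ fun k _ =>
      integrable_finset_sum _ fun l _ => hint s k l
  constructor
  · exact hI.congr (Filter.Eventually.of_forall fun ω => (hfun ω).symm)
  · rw [integral_congr_ae (Filter.Eventually.of_forall hfun),
      integral_finset_sum _ fun s _ => integrable_finset_sum _ fun k _ =>
        integrable_finset_sum _ fun l _ => hint s k l, Finset.mul_sum]
    refine Finset.sum_congr rfl fun s _ => ?_
    rw [integral_finset_sum _ fun k _ => integrable_finset_sum _ fun l _ => hint s k l,
      Finset.mul_sum]
    refine Finset.sum_congr rfl fun k _ => ?_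
    rw [integral_finset_sum _ fun l _ => hint s k l, Finset.mul_sum]
    exact Finset.sum_congr rfl fun l _ => (integral_const_mul _ _)

end Helpers

/-- For two mutually independent iid samples with means `μ₁, μ₂` and covariances
`S₁, S₂`, and a new observation `x₀` independent of both with mean `μ₁` and
covariance `S₁`, the classifier `(x̄₁ − x̄₂)′x₀ − ½(x̄₁′x̄₁ − x̄₂′x̄₂)` has
expectation `½‖μ₁ − μ₂‖² − B` where `B = tr(S₁)/(2n₁) − tr(S₂)/(2n₂)`. -/
theorem stmt0
    {Ω : Type*} [MeasureSpace Ω] [IsProbabilityMeasure (volume : Measure Ω)]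
    (p n₁ n₂ : ℕ) (hn₁ : 0 < n₁) (hn₂ : 0 < n₂)
    (X1 : Fin n₁ → Ω → (Fin p → ℝ)) (X2 : Fin n₂ → Ω → (Fin p → ℝ))
    (x0 : Ω → (Fin p → ℝ))
    (μ1 μ2 : Fin p → ℝ) (S1 S2 : Matrix (Fin p) (Fin p) ℝ)
    (hmeas1 : ∀ k, Measurable (X1 k)) (hmeas2 : ∀ k, Measurable (X2 k))
    (hmeas0 : Measurable x0)
    (hindep : iIndepFun
      (Sum.elim X1 (Sum.elim X2 (fun _ : Unit => x0))) volume)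
    (hL2_1 : ∀ k, MemLp (X1 k) 2) (hL2_2 : ∀ k, MemLp (X2 k) 2)
    (hL2_0 : MemLp x0 2)
    (hmean1 : ∀ k s, ∫ ω, X1 k ω s = μ1 s)
    (hmean2 : ∀ k s, ∫ ω, X2 k ω s = μ2 s)
    (hmean0 : ∀ s, ∫ ω, x0 ω s = μ1 s)
    (hcov1 : ∀ k s t, ∫ ω, (X1 k ω s - μ1 s) * (X1 k ω t - μ1 t) = S1 s t)
    (hcov2 : ∀ k s t, ∫ ω, (X2 k ω s - μ2 s) * (X2 k ω t - μ2 t) = S2 s t)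
    (hcov0 : ∀ s t, ∫ ω, (x0 ω s - μ1 s) * (x0 ω t - μ1 t) = S1 s t) :
    (∫ ω, ((((n₁ : ℝ)⁻¹ • ∑ k, X1 k ω) - ((n₂ : ℝ)⁻¹ • ∑ l, X2 l ω)) ⬝ᵥ x0 ω
        - (1/2) * ((((n₁ : ℝ)⁻¹ • ∑ k, X1 k ω) ⬝ᵥ ((n₁ : ℝ)⁻¹ • ∑ k, X1 k ω))
            - (((n₂ : ℝ)⁻¹ • ∑ l, X2 l ω) ⬝ᵥ ((n₂ : ℝ)⁻¹ • ∑ l, X2 l ω)))))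
      = (1/2) * ((μ1 - μ2) ⬝ᵥ (μ1 - μ2))
        - (S1.trace / (2 * n₁) - S2.trace / (2 * n₂)) := by
  have hne1 : (n₁ : ℝ) ≠ 0 := Nat.cast_ne_zero.mpr hn₁.ne'
  have hne2 : (n₂ : ℝ) ≠ 0 := Nat.cast_ne_zero.mpr hn₂.ne'
  -- independence facts
  have hind10 : ∀ k, IndepFun (X1 k) x0 := fun k =>
    hindep.indepFun (i := Sum.inl k) (j := Sum.inr (Sum.inr ())) (by simp)
  have hind20 : ∀ l, IndepFun (X2 l) x0 := fun l =>
    hindep.indepFun (i := Sum.inr (Sum.inl l)) (j := Sum.inr (Sum.inr ())) (by simp)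
  have hind11 : ∀ k l, k ≠ l → IndepFun (X1 k) (X1 l) := fun k l h =>
    hindep.indepFun (i := Sum.inl k) (j := Sum.inl l) (by simp [h])
  have hind22 : ∀ k l, k ≠ l → IndepFun (X2 k) (X2 l) := fun k l h =>
    hindep.indepFun (i := Sum.inr (Sum.inl k)) (j := Sum.inr (Sum.inl l)) (by simp [h])
  -- moments
  have m10 : ∀ (k : Fin n₁) (s : Fin p), (∫ ω, X1 k ω s * x0 ω s) = μ1 s * μ1 s :=
    fun k s => cross_moment (hmeas1 k) hmeas0 (hL2_1 k) hL2_0 (hind10 k) (hmean1 k) hmean0 s s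
  have m20 : ∀ (l : Fin n₂) (s : Fin p), (∫ ω, X2 l ω s * x0 ω s) = μ2 s * μ1 s :=
    fun l s => cross_moment (hmeas2 l) hmeas0 (hL2_2 l) hL2_0 (hind20 l) (hmean2 l) hmean0 s s
  have m11 : ∀ (k l : Fin n₁) (s : Fin p),
      (∫ ω, X1 k ω s * X1 l ω s) = (if k = l then S1 s s else 0) + μ1 s * μ1 s := by
    intro k l s
    by_cases h : k = l
    · subst h
      rw [if_pos rfl]
      exact second_moment (hmeas1 k) (hL2_1 k) (hmean1 k) (hcov1 k) s s
    · rw [if_neg h, zero_add]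
      exact cross_moment (hmeas1 k) (hmeas1 l) (hL2_1 k) (hL2_1 l) (hind11 k l h)
        (hmean1 k) (hmean1 l) s s
  have m22 : ∀ (k l : Fin n₂) (s : Fin p),
      (∫ ω, X2 k ω s * X2 l ω s) = (if k = l then S2 s s else 0) + μ2 s * μ2 s := by
    intro k l s
    by_cases h : k = l
    · subst h
      rw [if_pos rfl]
      exact second_moment (hmeas2 k) (hL2_2 k) (hmean2 k) (hcov2 k) s s
    · rw [if_neg h, zero_add]
      exact cross_moment (hmeas2 k) (hmeas2 l) (hL2_2 k) (hL2_2 l) (hind22 k l h)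
        (hmean2 k) (hmean2 l) s s
  -- the four pieces
  obtain ⟨hI1, hE1⟩ := dot_single X1 x0 hmeas1 hmeas0 hL2_1 hL2_0 (n₁ : ℝ)⁻¹
  obtain ⟨hI2, hE2⟩ := dot_single X2 x0 hmeas2 hmeas0 hL2_2 hL2_0 (n₂ : ℝ)⁻¹
  obtain ⟨hI3, hE3⟩ := dot_avg X1 X1 hmeas1 hmeas1 hL2_1 hL2_1 (n₁ : ℝ)⁻¹ (n₁ : ℝ)⁻¹
  obtain ⟨hI4, hE4⟩ := dot_avg X2 X2 hmeas2 hmeas2 hL2_2 hL2_2 (n₂ : ℝ)⁻¹ (n₂ : ℝ)⁻¹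
  -- evaluate the four integrals
  have E1 : (∫ ω, ((n₁ : ℝ)⁻¹ • ∑ k, X1 k ω) ⬝ᵥ x0 ω) = ∑ s, μ1 s * μ1 s := by
    rw [hE1]
    have h : (∑ s, ∑ k : Fin n₁, ∫ ω, X1 k ω s * x0 ω s)
        = (n₁ : ℝ) * ∑ s, μ1 s * μ1 s := by
      rw [Finset.mul_sum]
      refine Finset.sum_congr rfl fun s _ => ?_
      rw [Finset.sum_congr rfl fun k _ => m10 k s]
      simp [Finset.sum_const, mul_comm]
    rw [h, inv_mul_cancel_left₀ hne1]
  have E2 : (∫ ω, ((n₂ : ℝ)⁻¹ • ∑ l, X2 l ω) ⬝ᵥ x0 ω) = ∑ s, μ2 s * μ1 s := by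
    rw [hE2]
    have h : (∑ s, ∑ l : Fin n₂, ∫ ω, X2 l ω s * x0 ω s)
        = (n₂ : ℝ) * ∑ s, μ2 s * μ1 s := by
      rw [Finset.mul_sum]
      refine Finset.sum_congr rfl fun s _ => ?_
      rw [Finset.sum_congr rfl fun l _ => m20 l s]
      simp [Finset.sum_const, mul_comm]
    rw [h, inv_mul_cancel_left₀ hne2]
  have E3 : (∫ ω, ((n₁ : ℝ)⁻¹ • ∑ k, X1 k ω) ⬝ᵥ ((n₁ : ℝ)⁻¹ • ∑ k, X1 k ω))
      = (∑ s, μ1 s * μ1 s) + (∑ s, S1 s s) / n₁ := by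
    rw [hE3]
    have h : ∀ s : Fin p, (∑ k : Fin n₁, ∑ l : Fin n₁, ∫ ω, X1 k ω s * X1 l ω s)
        = (n₁ : ℝ) * S1 s s + (n₁ : ℝ) * (n₁ : ℝ) * (μ1 s * μ1 s) := by
      intro s
      rw [Finset.sum_congr rfl fun k _ => Finset.sum_congr rfl fun l _ => m11 k l s]
      simp [Finset.sum_add_distrib, Finset.sum_ite_eq, Finset.sum_const, mul_comm, mul_assoc]
      ring
    rw [Finset.sum_congr rfl fun s _ => h s, Finset.sum_add_distrib, ← Finset.mul_sum,
      ← Finset.mul_sum]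
    field_simp
    ring
  have E4 : (∫ ω, ((n₂ : ℝ)⁻¹ • ∑ l, X2 l ω) ⬝ᵥ ((n₂ : ℝ)⁻¹ • ∑ l, X2 l ω))
      = (∑ s, μ2 s * μ2 s) + (∑ s, S2 s s) / n₂ := by
    rw [hE4]
    have h : ∀ s : Fin p, (∑ k : Fin n₂, ∑ l : Fin n₂, ∫ ω, X2 k ω s * X2 l ω s)
        = (n₂ : ℝ) * S2 s s + (n₂ : ℝ) * (n₂ : ℝ) * (μ2 s * μ2 s) := by
      intro s
      rw [Finset.sum_congr rfl fun k _ => Finset.sum_congr rfl fun l _ => m22 k l s]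
      simp [Finset.sum_add_distrib, Finset.sum_ite_eq, Finset.sum_const, mul_comm, mul_assoc]
      ring
    rw [Finset.sum_congr rfl fun s _ => h s, Finset.sum_add_distrib, ← Finset.mul_sum,
      ← Finset.mul_sum]
    field_simp
    ring
  -- split the integral
  have hsplit : (∫ ω, ((((n₁ : ℝ)⁻¹ • ∑ k, X1 k ω) - ((n₂ : ℝ)⁻¹ • ∑ l, X2 l ω)) ⬝ᵥ x0 ω
        - (1/2) * ((((n₁ : ℝ)⁻¹ • ∑ k, X1 k ω) ⬝ᵥ ((n₁ : ℝ)⁻¹ • ∑ k, X1 k ω))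
            - (((n₂ : ℝ)⁻¹ • ∑ l, X2 l ω) ⬝ᵥ ((n₂ : ℝ)⁻¹ • ∑ l, X2 l ω)))))
      = (∫ ω, ((n₁ : ℝ)⁻¹ • ∑ k, X1 k ω) ⬝ᵥ x0 ω)
        - (∫ ω, ((n₂ : ℝ)⁻¹ • ∑ l, X2 l ω) ⬝ᵥ x0 ω)
        - (1/2) * ((∫ ω, ((n₁ : ℝ)⁻¹ • ∑ k, X1 k ω) ⬝ᵥ ((n₁ : ℝ)⁻¹ • ∑ k, X1 k ω))
            - (∫ ω, ((n₂ : ℝ)⁻¹ • ∑ l, X2 l ω) ⬝ᵥ ((n₂ : ℝ)⁻¹ • ∑ l, X2 l ω))) := by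
    have h12 : Integrable (fun ω => ((n₁ : ℝ)⁻¹ • ∑ k, X1 k ω) ⬝ᵥ x0 ω
        - ((n₂ : ℝ)⁻¹ • ∑ l, X2 l ω) ⬝ᵥ x0 ω) := hI1.sub hI2
    have h34 : Integrable (fun ω => (1/2 : ℝ)
        * ((((n₁ : ℝ)⁻¹ • ∑ k, X1 k ω) ⬝ᵥ ((n₁ : ℝ)⁻¹ • ∑ k, X1 k ω))
          - (((n₂ : ℝ)⁻¹ • ∑ l, X2 l ω) ⬝ᵥ ((n₂ : ℝ)⁻¹ • ∑ l, X2 l ω)))) :=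
      (hI3.sub hI4).const_mul _
    simp only [sub_dotProduct]
    rw [integral_sub h12 h34, integral_sub hI1 hI2, integral_const_mul, integral_sub hI3 hI4]
  rw [hsplit, E1, E2, E3, E4]
  -- final algebra
  have htr1 : S1.trace = ∑ s, S1 s s := by simp [Matrix.trace, Matrix.diag]
  have htr2 : S2.trace = ∑ s, S2 s s := by simp [Matrix.trace, Matrix.diag]
  have hdot : (μ1 - μ2) ⬝ᵥ (μ1 - μ2)
      = (∑ s, μ1 s * μ1 s) - 2 * (∑ s, μ2 s * μ1 s) + ∑ s, μ2 s * μ2 s := by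
    simp only [dotProduct, Pi.sub_apply]
    rw [Finset.mul_sum, ← Finset.sum_sub_distrib, ← Finset.sum_add_distrib]
    exact Finset.sum_congr rfl fun s _ => by ring
  rw [htr1, htr2, hdot]
  field_simp
  ring
end

section
/- Let A₀(x) = (1/p)(x̄₁ − x̄₂)′x₀ − ½(U_{n₁} − U_{n₂}), with U_{nᵢ} = (1/(p nᵢ(nᵢ−1))) Σ_{k≠r} x_{ik}′x_{ir}. If x₀ is independent of both samples with mean μ₁, then E[A₀(x)] = ‖μ₁ − μ₂‖²/(2p), with no bias term. -/
open MeasureTheory ProbabilityTheory Matrix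

lemma sum_dot' {ι : Type*} {p : ℕ} (s : Finset ι) (f : ι → Fin p → ℝ) (v : Fin p → ℝ) :
    (∑ k ∈ s, f k) ⬝ᵥ v = ∑ k ∈ s, f k ⬝ᵥ v := by
  simp only [dotProduct, Finset.sum_apply, Finset.sum_mul]
  exact Finset.sum_comm

lemma ite_double_count {n : ℕ} (c : ℝ) :
    ∑ k : Fin n, ∑ r : Fin n, (if k ≠ r then c else 0) = (n : ℝ) * ((n : ℝ) - 1) * c := by
  have h1 : ∀ k : Fin n, ∑ r : Fin n, (if k ≠ r then c else 0) = ((n : ℝ) - 1) * c := by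
    intro k
    have h : ∀ r : Fin n, (if k ≠ r then c else 0) = c - (if k = r then c else 0) := by
      intro r; by_cases h : k = r <;> simp [h]
    simp only [h, Finset.sum_sub_distrib, Finset.sum_ite_eq, Finset.sum_const,
      Finset.card_univ, Fintype.card_fin, nsmul_eq_mul, Finset.mem_univ, if_true]
    ring
  simp only [h1, Finset.sum_const, Finset.card_univ, Fintype.card_fin, nsmul_eq_mul]
  ring

lemma coord_memL2 {Ω : Type*} [MeasureSpace Ω] {p : ℕ} {f : Ω → Fin p → ℝ}
    (hf : MemLp f 2) (hmf : Measurable f) (s : Fin p) :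
    MemLp (fun ω => f ω s) 2 :=
  hf.of_le ((measurable_pi_apply s).comp hmf).aestronglyMeasurable
    (Filter.Eventually.of_forall fun ω => by
      simpa using norm_le_pi_norm (f ω) s)

lemma dot_integrable {Ω : Type*} [MeasureSpace Ω] [IsProbabilityMeasure (volume : Measure Ω)]
    {p : ℕ} {f g : Ω → Fin p → ℝ} (hmf : Measurable f) (hmg : Measurable g)
    (hf : MemLp f 2) (hg : MemLp g 2) (hind : IndepFun f g) :
    Integrable (fun ω => f ω ⬝ᵥ g ω) := by
  simp only [dotProduct]
  refine integrable_finset_sum _ fun s _ => ?_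
  exact (hind.comp (measurable_pi_apply s) (measurable_pi_apply s)).integrable_mul
    ((coord_memL2 hf hmf s).integrable one_le_two)
    ((coord_memL2 hg hmg s).integrable one_le_two)

lemma dot_integral {Ω : Type*} [MeasureSpace Ω] [IsProbabilityMeasure (volume : Measure Ω)]
    {p : ℕ} {f g : Ω → Fin p → ℝ} (hmf : Measurable f) (hmg : Measurable g)
    (hf : MemLp f 2) (hg : MemLp g 2) (hind : IndepFun f g)
    {μf μg : Fin p → ℝ} (hμf : ∀ s, ∫ ω, f ω s = μf s) (hμg : ∀ s, ∫ ω, g ω s = μg s) :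
    ∫ ω, f ω ⬝ᵥ g ω = μf ⬝ᵥ μg := by
  simp only [dotProduct]
  rw [integral_finset_sum]
  · refine Finset.sum_congr rfl fun s _ => ?_
    have h := (hind.comp (measurable_pi_apply s) (measurable_pi_apply s)).integral_mul_eq_mul_integral
      ((coord_memL2 hf hmf s).integrable one_le_two).aestronglyMeasurable
      ((coord_memL2 hg hmg s).integrable one_le_two).aestronglyMeasurable
    simpa [Function.comp_def, hμf s, hμg s] using h
  · intro s _
    exact (hind.comp (measurable_pi_apply s) (measurable_pi_apply s)).integrable_mul
      ((coord_memL2 hf hmf s).integrable one_le_two)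
      ((coord_memL2 hg hmg s).integrable one_le_two)

/-- For `A₀(x) = (1/p)(x̄₁ − x̄₂)′x₀ − ½(U_{n₁} − U_{n₂})` with
`U_{nᵢ} = (1/(p nᵢ(nᵢ−1))) Σ_{k≠r} x_{ik}′x_{ir}`, if `x₀` is independent of
both samples with mean `μ₁`, then `E[A₀(x)] = ‖μ₁ − μ₂‖²/(2p)`. -/
theorem stmt4
    {Ω : Type*} [MeasureSpace Ω] [IsProbabilityMeasure (volume : Measure Ω)]
    (p n₁ n₂ : ℕ) (hp : 0 < p) (hn₁ : 2 ≤ n₁) (hn₂ : 2 ≤ n₂)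
    (X1 : Fin n₁ → Ω → (Fin p → ℝ)) (X2 : Fin n₂ → Ω → (Fin p → ℝ))
    (x0 : Ω → (Fin p → ℝ)) (μ1 μ2 : Fin p → ℝ)
    (hmeas1 : ∀ k, Measurable (X1 k)) (hmeas2 : ∀ k, Measurable (X2 k))
    (hmeas0 : Measurable x0)
    (hindep : iIndepFun
      (Sum.elim X1 (Sum.elim X2 (fun _ : Unit => x0))) volume)
    (hL2_1 : ∀ k, MemLp (X1 k) 2) (hL2_2 : ∀ k, MemLp (X2 k) 2)
    (hL2_0 : MemLp x0 2)
    (hmean1 : ∀ k s, ∫ ω, X1 k ω s = μ1 s)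
    (hmean2 : ∀ k s, ∫ ω, X2 k ω s = μ2 s)
    (hmean0 : ∀ s, ∫ ω, x0 ω s = μ1 s) :
    ∫ ω,
      ((p : ℝ)⁻¹ * ((((n₁ : ℝ)⁻¹ • ∑ k, X1 k ω)
            - ((n₂ : ℝ)⁻¹ • ∑ l, X2 l ω)) ⬝ᵥ x0 ω)
        - (1/2) *
          (((p : ℝ) * n₁ * ((n₁ : ℝ) - 1))⁻¹ *
              (∑ k, ∑ r, (if k ≠ r then X1 k ω ⬝ᵥ X1 r ω else 0))
            - ((p : ℝ) * n₂ * ((n₂ : ℝ) - 1))⁻¹ *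
              (∑ k, ∑ r, (if k ≠ r then X2 k ω ⬝ᵥ X2 r ω else 0))))
      = ((μ1 - μ2) ⬝ᵥ (μ1 - μ2)) / (2 * p) := by
  -- independence facts
  have ind10 : ∀ k, IndepFun (X1 k) x0 volume := by
    intro k
    have h := hindep.indepFun (i := Sum.inl k) (j := Sum.inr (Sum.inr ())) (by simp)
    simpa using h
  have ind20 : ∀ l, IndepFun (X2 l) x0 volume := by
    intro l
    have h := hindep.indepFun (i := Sum.inr (Sum.inl l)) (j := Sum.inr (Sum.inr ())) (by simp)
    simpa using h
  have ind11 : ∀ k r, k ≠ r → IndepFun (X1 k) (X1 r) volume := by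
    intro k r hkr
    have h := hindep.indepFun (i := Sum.inl k) (j := Sum.inl r) (by simp [hkr])
    simpa using h
  have ind22 : ∀ k r, k ≠ r → IndepFun (X2 k) (X2 r) volume := by
    intro k r hkr
    have h := hindep.indepFun (i := Sum.inr (Sum.inl k)) (j := Sum.inr (Sum.inl r))
      (by simp [hkr])
    simpa using h
  -- integrability of elementary terms
  have hI10 : ∀ k, Integrable (fun ω => X1 k ω ⬝ᵥ x0 ω) :=
    fun k => dot_integrable (hmeas1 k) hmeas0 (hL2_1 k) hL2_0 (ind10 k)
  have hI20 : ∀ l, Integrable (fun ω => X2 l ω ⬝ᵥ x0 ω) :=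
    fun l => dot_integrable (hmeas2 l) hmeas0 (hL2_2 l) hL2_0 (ind20 l)
  have hI11 : ∀ k r, Integrable (fun ω => if k ≠ r then X1 k ω ⬝ᵥ X1 r ω else 0) := by
    intro k r
    by_cases h : k = r
    · simp [h]
    · simpa [h] using dot_integrable (hmeas1 k) (hmeas1 r) (hL2_1 k) (hL2_1 r) (ind11 k r h)
  have hI22 : ∀ k r, Integrable (fun ω => if k ≠ r then X2 k ω ⬝ᵥ X2 r ω else 0) := by
    intro k r
    by_cases h : k = r
    · simp [h]
    · simpa [h] using dot_integrable (hmeas2 k) (hmeas2 r) (hL2_2 k) (hL2_2 r) (ind22 k r h)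
  -- values of elementary integrals
  have hE10 : ∀ k, ∫ ω, X1 k ω ⬝ᵥ x0 ω = μ1 ⬝ᵥ μ1 :=
    fun k => dot_integral (hmeas1 k) hmeas0 (hL2_1 k) hL2_0 (ind10 k) (hmean1 k) hmean0
  have hE20 : ∀ l, ∫ ω, X2 l ω ⬝ᵥ x0 ω = μ2 ⬝ᵥ μ1 :=
    fun l => dot_integral (hmeas2 l) hmeas0 (hL2_2 l) hL2_0 (ind20 l) (hmean2 l) hmean0
  have hE11 : ∀ k r, ∫ ω, (if k ≠ r then X1 k ω ⬝ᵥ X1 r ω else 0)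
      = if k ≠ r then μ1 ⬝ᵥ μ1 else 0 := by
    intro k r
    by_cases h : k = r
    · simp [h]
    · simp only [h, ne_eq, not_false_eq_true, if_true]
      exact dot_integral (hmeas1 k) (hmeas1 r) (hL2_1 k) (hL2_1 r) (ind11 k r h)
        (hmean1 k) (hmean1 r)
  have hE22 : ∀ k r, ∫ ω, (if k ≠ r then X2 k ω ⬝ᵥ X2 r ω else 0)
      = if k ≠ r then μ2 ⬝ᵥ μ2 else 0 := by
    intro k r
    by_cases h : k = r
    · simp [h]
    · simp only [h, ne_eq, not_false_eq_true, if_true]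
      exact dot_integral (hmeas2 k) (hmeas2 r) (hL2_2 k) (hL2_2 r) (ind22 k r h)
        (hmean2 k) (hmean2 r)
  -- aggregate integrability
  have hIS1 : Integrable (fun ω => ∑ k, ∑ r, (if k ≠ r then X1 k ω ⬝ᵥ X1 r ω else 0)) :=
    integrable_finset_sum _ fun k _ => integrable_finset_sum _ fun r _ => hI11 k r
  have hIS2 : Integrable (fun ω => ∑ k, ∑ r, (if k ≠ r then X2 k ω ⬝ᵥ X2 r ω else 0)) :=
    integrable_finset_sum _ fun k _ => integrable_finset_sum _ fun r _ => hI22 k r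
  have hT1eq : (fun ω => (((n₁ : ℝ)⁻¹ • ∑ k, X1 k ω) - ((n₂ : ℝ)⁻¹ • ∑ l, X2 l ω)) ⬝ᵥ x0 ω)
      = fun ω => (n₁ : ℝ)⁻¹ * (∑ k, X1 k ω ⬝ᵥ x0 ω)
        - (n₂ : ℝ)⁻¹ * (∑ l, X2 l ω ⬝ᵥ x0 ω) := by
    funext ω
    rw [sub_dotProduct, smul_dotProduct, smul_dotProduct, sum_dot', sum_dot']
    simp [smul_eq_mul]
  have hIT1 : Integrable (fun ω => (((n₁ : ℝ)⁻¹ • ∑ k, X1 k ω)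
      - ((n₂ : ℝ)⁻¹ • ∑ l, X2 l ω)) ⬝ᵥ x0 ω) := by
    rw [hT1eq]
    exact ((integrable_finset_sum _ fun k _ => hI10 k).const_mul _).sub
      ((integrable_finset_sum _ fun l _ => hI20 l).const_mul _)
  -- sums of expectations
  have hES1 : ∫ ω, (∑ k, ∑ r, (if k ≠ r then X1 k ω ⬝ᵥ X1 r ω else 0))
      = (n₁ : ℝ) * ((n₁ : ℝ) - 1) * (μ1 ⬝ᵥ μ1) := by
    rw [integral_finset_sum _ fun k _ => integrable_finset_sum _ fun r _ => hI11 k r]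
    simp only [integral_finset_sum _ fun r _ => hI11 _ r, hE11]
    exact ite_double_count _
  have hES2 : ∫ ω, (∑ k, ∑ r, (if k ≠ r then X2 k ω ⬝ᵥ X2 r ω else 0))
      = (n₂ : ℝ) * ((n₂ : ℝ) - 1) * (μ2 ⬝ᵥ μ2) := by
    rw [integral_finset_sum _ fun k _ => integrable_finset_sum _ fun r _ => hI22 k r]
    simp only [integral_finset_sum _ fun r _ => hI22 _ r, hE22]
    exact ite_double_count _
  have hET1 : ∫ ω, (((n₁ : ℝ)⁻¹ • ∑ k, X1 k ω) - ((n₂ : ℝ)⁻¹ • ∑ l, X2 l ω)) ⬝ᵥ x0 ω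
      = (n₁ : ℝ)⁻¹ * ((n₁ : ℝ) * (μ1 ⬝ᵥ μ1)) - (n₂ : ℝ)⁻¹ * ((n₂ : ℝ) * (μ2 ⬝ᵥ μ1)) := by
    rw [hT1eq, integral_sub ((integrable_finset_sum _ fun k _ => hI10 k).const_mul _)
      ((integrable_finset_sum _ fun l _ => hI20 l).const_mul _),
      integral_const_mul _ _, integral_const_mul _ _,
      integral_finset_sum _ fun k _ => hI10 k, integral_finset_sum _ fun l _ => hI20 l]
    simp [hE10, hE20]
  -- put everything together
  have hB : Integrable (fun ω =>
      ((p : ℝ) * n₁ * ((n₁ : ℝ) - 1))⁻¹ *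
          (∑ k, ∑ r, (if k ≠ r then X1 k ω ⬝ᵥ X1 r ω else 0))
        - ((p : ℝ) * n₂ * ((n₂ : ℝ) - 1))⁻¹ *
          (∑ k, ∑ r, (if k ≠ r then X2 k ω ⬝ᵥ X2 r ω else 0))) := by
    exact (hIS1.const_mul _).sub (hIS2.const_mul _)
  rw [integral_sub (hIT1.const_mul _) (hB.const_mul _),
    integral_const_mul _ _, integral_const_mul _ _,
    integral_sub (hIS1.const_mul _) (hIS2.const_mul _),
    integral_const_mul _ _, integral_const_mul _ _, hET1, hES1, hES2]
  -- arithmetic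
  have hp' : (p : ℝ) ≠ 0 := Nat.cast_ne_zero.mpr hp.ne'
  have hn₁' : (n₁ : ℝ) ≠ 0 := Nat.cast_ne_zero.mpr (by omega)
  have hn₂' : (n₂ : ℝ) ≠ 0 := Nat.cast_ne_zero.mpr (by omega)
  have hn₁1 : (n₁ : ℝ) - 1 ≠ 0 := by
    have : (2 : ℝ) ≤ (n₁ : ℝ) := by exact_mod_cast hn₁
    linarith
  have hn₂1 : (n₂ : ℝ) - 1 ≠ 0 := by
    have : (2 : ℝ) ≤ (n₂ : ℝ) := by exact_mod_cast hn₂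
    linarith
  have hdot : (μ1 - μ2) ⬝ᵥ (μ1 - μ2)
      = μ1 ⬝ᵥ μ1 - 2 * (μ2 ⬝ᵥ μ1) + μ2 ⬝ᵥ μ2 := by
    rw [sub_dotProduct, dotProduct_sub, dotProduct_sub, dotProduct_comm μ1 μ2]
    ring
  rw [hdot]
  field_simp
  ring
end

section
/- Let x₀ be independent of the two independent samples with E[x₀] = μ₁, Cov(x₀) = Σ₁. Then Var[x₀′(x̄₁ − x̄₂)] = tr(Σ₁²)/n₁ + tr(Σ₁Σ₂)/n₂ + μ₁′Σ₁μ₁/n₁ + μ₁′Σ₂μ₁/n₂ + (μ₁ − μ₂)′Σ₁(μ₁ − μ₂). -/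
open MeasureTheory ProbabilityTheory Matrix
open scoped ENNReal

private theorem l2_mul_int {Ω : Type*} [MeasureSpace Ω]
    [IsProbabilityMeasure (volume : Measure Ω)] {f g : Ω → ℝ}
    (hf : MemLp f 2) (hg : MemLp g 2) :
    Integrable (fun ω => f ω * g ω) := by
  have h : (fun ω => f ω * g ω)
      = fun ω => ((f ω + g ω)^2 - f ω^2 - g ω^2) / 2 := by funext ω; ring
  rw [h]
  have h1 : Integrable (fun ω => (f ω + g ω)^2) := by
    have : MemLp (fun ω => f ω + g ω) 2 := hf.add hg
    exact this.integrable_sq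
  exact ((h1.sub hf.integrable_sq).sub hg.integrable_sq).div_const 2

private theorem second_moment_s6 {Ω : Type*} [MeasureSpace Ω]
    [IsProbabilityMeasure (volume : Measure Ω)] {u v : Ω → ℝ} {a b C : ℝ}
    (hu : MemLp u 2) (hv : MemLp v 2)
    (hua : ∫ ω, u ω = a) (hvb : ∫ ω, v ω = b)
    (hC : ∫ ω, (u ω - a) * (v ω - b) = C) :
    ∫ ω, u ω * v ω = C + a * b := by
  have huv : Integrable (fun ω => u ω * v ω) := l2_mul_int hu hv
  have hui : Integrable u := hu.integrable one_le_two
  have hvi : Integrable v := hv.integrable one_le_two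
  have h1 : Integrable (fun ω => a * v ω) := hvi.const_mul a
  have h2 : Integrable (fun ω => b * u ω) := hui.const_mul b
  have h3 : Integrable (fun ω => u ω * v ω - a * v ω) := huv.sub h1
  have h4 : Integrable (fun ω => u ω * v ω - a * v ω - b * u ω) := h3.sub h2
  have key : ∫ ω, (u ω - a) * (v ω - b) = (∫ ω, u ω * v ω) - a * b := by
    calc ∫ ω, (u ω - a) * (v ω - b)
        = ∫ ω, (u ω * v ω - a * v ω - b * u ω + a * b) := by
          congr 1; funext ω; ring
      _ = (∫ ω, (u ω * v ω - a * v ω - b * u ω)) + ∫ _ω, (a * b : ℝ) :=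
          integral_add h4 (integrable_const _)
      _ = ((∫ ω, u ω * v ω) - ∫ ω, a * v ω) - (∫ ω, b * u ω) + a * b := by
          rw [integral_sub h3 h2, integral_sub huv h1, integral_const]
          simp
      _ = (∫ ω, u ω * v ω) - a * b := by
          rw [integral_const_mul, integral_const_mul, hua, hvb]; ring
  rw [hC] at key; linarith

private theorem indep_integral_mul {Ω : Type*} [MeasureSpace Ω] {X Y : Ω → ℝ}
    (h : IndepFun X Y volume) (hX : Integrable X) (hY : Integrable Y) :
    ∫ ω, X ω * Y ω = (∫ ω, X ω) * ∫ ω, Y ω :=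
  h.integral_mul_eq_mul_integral hX.1 hY.1


/-- With `x₀` independent of the two independent samples, `E[x₀] = μ₁`,
`Cov(x₀) = S₁`, the variance of `x₀′(x̄₁ − x̄₂)` equals
`tr(S₁²)/n₁ + tr(S₁S₂)/n₂ + μ₁′S₁μ₁/n₁ + μ₁′S₂μ₁/n₂ + (μ₁−μ₂)′S₁(μ₁−μ₂)`. -/
theorem stmt6
    {Ω : Type*} [MeasureSpace Ω] [IsProbabilityMeasure (volume : Measure Ω)]
    (p n₁ n₂ : ℕ) (hn₁ : 0 < n₁) (hn₂ : 0 < n₂)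
    (X1 : Fin n₁ → Ω → (Fin p → ℝ)) (X2 : Fin n₂ → Ω → (Fin p → ℝ))
    (x0 : Ω → (Fin p → ℝ))
    (μ1 μ2 : Fin p → ℝ) (S1 S2 : Matrix (Fin p) (Fin p) ℝ)
    (hmeas1 : ∀ k, Measurable (X1 k)) (hmeas2 : ∀ k, Measurable (X2 k))
    (hmeas0 : Measurable x0)
    (hindep : iIndepFun
      (Sum.elim X1 (Sum.elim X2 (fun _ : Unit => x0))) volume)
    (hL2_1 : ∀ k, MemLp (X1 k) 2) (hL2_2 : ∀ k, MemLp (X2 k) 2)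
    (hL2_0 : MemLp x0 2)
    (hmean1 : ∀ k s, ∫ ω, X1 k ω s = μ1 s)
    (hmean2 : ∀ k s, ∫ ω, X2 k ω s = μ2 s)
    (hmean0 : ∀ s, ∫ ω, x0 ω s = μ1 s)
    (hcov1 : ∀ k s t, ∫ ω, (X1 k ω s - μ1 s) * (X1 k ω t - μ1 t) = S1 s t)
    (hcov2 : ∀ k s t, ∫ ω, (X2 k ω s - μ2 s) * (X2 k ω t - μ2 t) = S2 s t)
    (hcov0 : ∀ s t, ∫ ω, (x0 ω s - μ1 s) * (x0 ω t - μ1 t) = S1 s t) :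
    ∫ ω,
      (x0 ω ⬝ᵥ (((n₁ : ℝ)⁻¹ • ∑ k, X1 k ω) - ((n₂ : ℝ)⁻¹ • ∑ l, X2 l ω))
        - ∫ ω', x0 ω' ⬝ᵥ (((n₁ : ℝ)⁻¹ • ∑ k, X1 k ω')
            - ((n₂ : ℝ)⁻¹ • ∑ l, X2 l ω')))^2
      = (S1 * S1).trace / n₁ + (S1 * S2).trace / n₂
        + (μ1 ⬝ᵥ (S1 *ᵥ μ1)) / n₁ + (μ1 ⬝ᵥ (S2 *ᵥ μ1)) / n₂
        + (μ1 - μ2) ⬝ᵥ (S1 *ᵥ (μ1 - μ2)) := by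
  classical
  have h12 : (1 : ℝ≥0∞) ≤ 2 := one_le_two
  have hn₁' : (n₁ : ℝ) ≠ 0 := Nat.cast_ne_zero.mpr hn₁.ne'
  have hn₂' : (n₂ : ℝ) ≠ 0 := Nat.cast_ne_zero.mpr hn₂.ne'
  have coordL2 : ∀ {g : Ω → Fin p → ℝ}, MemLp g 2 → ∀ s : Fin p,
      MemLp (fun ω => g ω s) 2 := by
    intro g hg s
    have := (ContinuousLinearMap.proj (R := ℝ) (φ := fun _ : Fin p => ℝ) s).comp_memLp' hg
    exact this
  set d : Fin p → ℝ := fun s => μ1 s - μ2 s with hd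
  set Z : Ω → Fin p → ℝ :=
    fun ω => ((n₁ : ℝ)⁻¹ • ∑ k, X1 k ω) - ((n₂ : ℝ)⁻¹ • ∑ l, X2 l ω) with hZdef
  set Y : Ω → ℝ := fun ω => ∑ s, x0 ω s * Z ω s with hYdef
  set W : (Fin n₁ ⊕ Fin n₂) → Ω → Fin p → ℝ := Sum.elim X1 X2 with hW
  set a : (Fin n₁ ⊕ Fin n₂) → ℝ :=
    Sum.elim (fun _ => (n₁ : ℝ)⁻¹) (fun _ => -(n₂ : ℝ)⁻¹) with ha
  set mW : (Fin n₁ ⊕ Fin n₂) → Fin p → ℝ := Sum.elim (fun _ => μ1) (fun _ => μ2) with hmW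
  set cW : (Fin n₁ ⊕ Fin n₂) → Matrix (Fin p) (Fin p) ℝ :=
    Sum.elim (fun _ => S1) (fun _ => S2) with hcW
  have hWL2 : ∀ i, MemLp (W i) 2 := by
    rintro (k | l)
    · simpa [hW] using hL2_1 k
    · simpa [hW] using hL2_2 l
  have hWcoordL2 : ∀ i s, MemLp (fun ω => W i ω s) 2 := fun i s => coordL2 (hWL2 i) s
  have hWmean : ∀ i s, ∫ ω, W i ω s = mW i s := by
    rintro (k | l) s
    · simpa [hW, hmW] using hmean1 k s
    · simpa [hW, hmW] using hmean2 l s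
  have hx0L2 : ∀ s, MemLp (fun ω => x0 ω s) 2 := fun s => coordL2 hL2_0 s
  have hFmeas : ∀ i, Measurable ((Sum.elim X1 (Sum.elim X2 (fun _ : Unit => x0))) i) := by
    rintro (k | l | u)
    · exact hmeas1 k
    · exact hmeas2 l
    · exact hmeas0
  -- Z as a linear combination
  have hZW : ∀ ω s, Z ω s = ∑ i, a i * W i ω s := by
    intro ω s
    simp only [hZdef, hW, ha, Pi.sub_apply, Pi.smul_apply, Finset.sum_apply, smul_eq_mul,
      Fintype.sum_sum_type, Sum.elim_inl, Sum.elim_inr, neg_mul, Finset.mul_sum]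
    rw [sub_eq_add_neg, ← Finset.sum_neg_distrib]
  have hZL2 : ∀ s, MemLp (fun ω => Z ω s) 2 := by
    intro s
    have h : (fun ω => Z ω s) = fun ω => ∑ i, a i * W i ω s := by
      funext ω; exact hZW ω s
    rw [h]
    exact memLp_finset_sum _ (fun i _ => (hWcoordL2 i s).const_mul (a i))
  have hZint : ∀ s, Integrable (fun ω => Z ω s) := fun s => (hZL2 s).integrable h12
  -- independence of Z and x0
  have hZx0 : IndepFun Z x0 volume := by
    rw [hZdef]
    have h := hindep.indepFun_finset
      ({Sum.inr (Sum.inr ())}ᶜ : Finset (Fin n₁ ⊕ (Fin n₂ ⊕ Unit)))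
      ({Sum.inr (Sum.inr ())} : Finset (Fin n₁ ⊕ (Fin n₂ ⊕ Unit)))
      disjoint_compl_left hFmeas
    have hG : Measurable (fun v : (↥({Sum.inr (Sum.inr ())}ᶜ :
          Finset (Fin n₁ ⊕ (Fin n₂ ⊕ Unit)))) → Fin p → ℝ =>
        ((n₁ : ℝ)⁻¹ • ∑ k : Fin n₁, v ⟨Sum.inl k, by simp⟩)
          - ((n₂ : ℝ)⁻¹ • ∑ l : Fin n₂, v ⟨Sum.inr (Sum.inl l), by simp⟩)) := by
      fun_prop
    have hH : Measurable (fun v : (↥({Sum.inr (Sum.inr ())} :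
          Finset (Fin n₁ ⊕ (Fin n₂ ⊕ Unit)))) → Fin p → ℝ =>
        v ⟨Sum.inr (Sum.inr ()), by simp⟩) := measurable_pi_apply _
    exact h.comp hG hH
  have hindZx1 : ∀ s t, IndepFun (fun ω => x0 ω s) (fun ω => Z ω t) volume :=
    fun s t => hZx0.symm.comp (measurable_pi_apply s) (measurable_pi_apply t)
  have hindZx : ∀ s t u v : Fin p,
      IndepFun (fun ω => x0 ω s * x0 ω t) (fun ω => Z ω u * Z ω v) volume :=
    fun s t u v => hZx0.symm.comp ((measurable_pi_apply s).mul (measurable_pi_apply t))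
      ((measurable_pi_apply u).mul (measurable_pi_apply v))
  -- second moments of the W family
  have hWW : ∀ i j s t, ∫ ω, W i ω s * W j ω t
      = (if i = j then cW i s t else 0) + mW i s * mW j t := by
    intro i j s t
    by_cases hij : i = j
    · subst hij
      rw [if_pos rfl]
      rcases i with k | l
      · simp only [hW, hcW, hmW, Sum.elim_inl]
        exact second_moment_s6 (coordL2 (hL2_1 k) s) (coordL2 (hL2_1 k) t)
          (hmean1 k s) (hmean1 k t) (hcov1 k s t)
      · simp only [hW, hcW, hmW, Sum.elim_inr]
        exact second_moment_s6 (coordL2 (hL2_2 l) s) (coordL2 (hL2_2 l) t)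
          (hmean2 l s) (hmean2 l t) (hcov2 l s t)
    · rw [if_neg hij, zero_add]
      have hFW : ∀ (i : Fin n₁ ⊕ Fin n₂),
          (Sum.elim X1 (Sum.elim X2 (fun _ : Unit => x0))) (Sum.map id Sum.inl i) = W i := by
        rintro (k | l) <;> simp [hW]
      have hne : (Sum.map id Sum.inl i : Fin n₁ ⊕ (Fin n₂ ⊕ Unit)) ≠ Sum.map id Sum.inl j := by
        cases i <;> cases j <;> simp_all
      have hind : IndepFun (W i) (W j) volume := by
        have h := hindep.indepFun hne
        rwa [hFW i, hFW j] at h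
      have hindc : IndepFun (fun ω => W i ω s) (fun ω => W j ω t) volume :=
        hind.comp (measurable_pi_apply s) (measurable_pi_apply t)
      rw [indep_integral_mul hindc ((hWcoordL2 i s).integrable h12)
          ((hWcoordL2 j t).integrable h12), hWmean, hWmean]
  -- sums of coefficients
  have hsum_am : ∀ u : Fin p, (∑ i, a i * mW i u) = d u := by
    intro u
    simp only [ha, hmW, hd, Fintype.sum_sum_type, Sum.elim_inl, Sum.elim_inr,
      Finset.sum_const, Finset.card_univ, Fintype.card_fin, nsmul_eq_mul, neg_mul]
    field_simp
    ring
  have hdiag : ∀ s t : Fin p, (∑ i, a i * a i * cW i s t) = S1 s t / n₁ + S2 s t / n₂ := by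
    intro s t
    simp only [ha, hcW, Fintype.sum_sum_type, Sum.elim_inl, Sum.elim_inr,
      Finset.sum_const, Finset.card_univ, Fintype.card_fin, nsmul_eq_mul, neg_mul,
      mul_neg, neg_neg]
    field_simp
  -- mean of Z
  have hEZ : ∀ s, ∫ ω, Z ω s = d s := by
    intro s
    have h0 : ∀ i : Fin n₁ ⊕ Fin n₂, Integrable (fun ω => a i * W i ω s) :=
      fun i => ((hWcoordL2 i s).integrable h12).const_mul (a i)
    calc ∫ ω, Z ω s = ∫ ω, ∑ i, a i * W i ω s := by simp_rw [hZW]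
      _ = ∑ i, ∫ ω, a i * W i ω s := integral_finset_sum _ fun i _ => h0 i
      _ = ∑ i, a i * mW i s := by
          refine Finset.sum_congr rfl fun i _ => ?_
          rw [integral_const_mul, hWmean]
      _ = d s := hsum_am s
  -- second moment of Z
  have hZZ : ∀ s t, ∫ ω, Z ω s * Z ω t = S1 s t / n₁ + S2 s t / n₂ + d s * d t := by
    intro s t
    have hint : ∀ (i j : Fin n₁ ⊕ Fin n₂),
        Integrable (fun ω => (a i * W i ω s) * (a j * W j ω t)) := by
      intro i j
      have h : (fun ω => (a i * W i ω s) * (a j * W j ω t))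
          = fun ω => (a i * a j) * (W i ω s * W j ω t) := by funext ω; ring
      rw [h]
      exact (l2_mul_int (hWcoordL2 i s) (hWcoordL2 j t)).const_mul _
    calc ∫ ω, Z ω s * Z ω t
        = ∫ ω, ∑ i, ∑ j, (a i * W i ω s) * (a j * W j ω t) := by
          simp_rw [hZW, Finset.sum_mul_sum]
      _ = ∑ i, ∑ j, ∫ ω, (a i * W i ω s) * (a j * W j ω t) := by
          rw [integral_finset_sum _ fun i _ => integrable_finset_sum _ fun j _ => hint i j]
          exact Finset.sum_congr rfl fun i _ => integral_finset_sum _ fun j _ => hint i j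
      _ = ∑ i, ∑ j, (a i * a j) * ((if i = j then cW i s t else 0) + mW i s * mW j t) := by
          refine Finset.sum_congr rfl fun i _ => Finset.sum_congr rfl fun j _ => ?_
          rw [show (fun ω => (a i * W i ω s) * (a j * W j ω t))
              = fun ω => (a i * a j) * (W i ω s * W j ω t) from by funext ω; ring]
          rw [integral_const_mul, hWW]
      _ = (∑ i, a i * a i * cW i s t) + ∑ i, ∑ j, (a i * mW i s) * (a j * mW j t) := by
          have h : ∀ (i j : Fin n₁ ⊕ Fin n₂),
              (a i * a j) * ((if i = j then cW i s t else 0) + mW i s * mW j t)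
              = (if i = j then a i * a i * cW i s t else 0)
                  + (a i * mW i s) * (a j * mW j t) := by
            intro i j
            by_cases h' : i = j
            · subst h'; simp only [eq_self_iff_true, if_true]; ring
            · simp only [if_neg h']; ring
          simp_rw [h, Finset.sum_add_distrib, Finset.sum_ite_eq, Finset.mem_univ, if_true]
      _ = S1 s t / n₁ + S2 s t / n₂ + d s * d t := by
          rw [← Finset.sum_mul_sum, hdiag, hsum_am, hsum_am]
  -- second moment of x0
  have hxx : ∀ s t, ∫ ω, x0 ω s * x0 ω t = S1 s t + μ1 s * μ1 t := fun s t =>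
    second_moment_s6 (hx0L2 s) (hx0L2 t) (hmean0 s) (hmean0 t) (hcov0 s t)
  -- integrability facts
  have hYint_terms : ∀ s, Integrable (fun ω => x0 ω s * Z ω s) :=
    fun s => l2_mul_int (hx0L2 s) (hZL2 s)
  have hxxint : ∀ s t, Integrable (fun ω => x0 ω s * x0 ω t) :=
    fun s t => l2_mul_int (hx0L2 s) (hx0L2 t)
  have hZZint : ∀ s t, Integrable (fun ω => Z ω s * Z ω t) :=
    fun s t => l2_mul_int (hZL2 s) (hZL2 t)
  have hprod_int : ∀ s t, Integrable (fun ω => (x0 ω s * x0 ω t) * (Z ω s * Z ω t)) :=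
    fun s t => (hindZx s t s t).integrable_mul (hxxint s t) (hZZint s t)
  have hYsq : ∀ ω, (Y ω)^2 = ∑ s, ∑ t, (x0 ω s * x0 ω t) * (Z ω s * Z ω t) := by
    intro ω
    simp only [hYdef]
    rw [sq, Finset.sum_mul_sum]
    exact Finset.sum_congr rfl fun s _ => Finset.sum_congr rfl fun t _ => by ring
  have hYint : Integrable Y := by
    rw [hYdef]
    exact integrable_finset_sum _ fun s _ => hYint_terms s
  have hY2int : Integrable (fun ω => (Y ω)^2) := by
    have h : (fun ω => (Y ω)^2) = fun ω => ∑ s, ∑ t, (x0 ω s * x0 ω t) * (Z ω s * Z ω t) := by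
      funext ω; exact hYsq ω
    rw [h]
    exact integrable_finset_sum _ fun s _ => integrable_finset_sum _ fun t _ => hprod_int s t
  -- mean of Y
  have hEY : ∫ ω, Y ω = ∑ s, μ1 s * d s := by
    simp only [hYdef]
    rw [integral_finset_sum _ fun s _ => hYint_terms s]
    refine Finset.sum_congr rfl fun s _ => ?_
    rw [indep_integral_mul (hindZx1 s s) ((hx0L2 s).integrable h12) (hZint s),
        hmean0 s, hEZ s]
  -- second moment of Y
  have hEY2 : ∫ ω, (Y ω)^2
      = ∑ s, ∑ t, (S1 s t + μ1 s * μ1 t) * (S1 s t / n₁ + S2 s t / n₂ + d s * d t) := by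
    simp_rw [hYsq]
    rw [integral_finset_sum _ fun s _ => integrable_finset_sum _ fun t _ => hprod_int s t]
    refine Finset.sum_congr rfl fun s _ => ?_
    rw [integral_finset_sum _ fun t _ => hprod_int s t]
    refine Finset.sum_congr rfl fun t _ => ?_
    rw [indep_integral_mul (hindZx s t s t) (hxxint s t) (hZZint s t),
        hxx s t, hZZ s t]
  -- variance formula
  have hvar : ∫ ω, (Y ω - ∫ ω', Y ω')^2 = (∫ ω, (Y ω)^2) - (∫ ω, Y ω)^2 := by
    set c := ∫ ω, Y ω with hc
    have h3 : Integrable (fun ω => (Y ω)^2 - 2*c*Y ω) := hY2int.sub (hYint.const_mul _)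
    calc ∫ ω, (Y ω - c)^2 = ∫ ω, ((Y ω)^2 - 2*c*Y ω + c^2) := by
          congr 1; funext ω; ring
      _ = (∫ ω, ((Y ω)^2 - 2*c*Y ω)) + ∫ _ω, (c^2 : ℝ) := integral_add h3 (integrable_const _)
      _ = ((∫ ω, (Y ω)^2) - ∫ ω, 2*c*Y ω) + c^2 := by
          rw [integral_sub hY2int (hYint.const_mul _), integral_const]; simp
      _ = (∫ ω, (Y ω)^2) - c^2 := by
          rw [integral_const_mul, ← hc]; ring
  -- symmetry of covariance matrices
  have hS1 : ∀ s t, S1 t s = S1 s t := by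
    intro s t
    rw [← hcov0 s t, ← hcov0 t s]
    exact integral_congr_ae (Filter.Eventually.of_forall fun ω => mul_comm _ _)
  have hS2 : ∀ s t, S2 t s = S2 s t := by
    intro s t
    rw [← hcov2 ⟨0, hn₂⟩ s t, ← hcov2 ⟨0, hn₂⟩ t s]
    exact integral_congr_ae (Filter.Eventually.of_forall fun ω => mul_comm _ _)
  -- expressing the RHS as double sums
  have e1 : (S1 * S1).trace = ∑ s, ∑ t, S1 s t * S1 s t := by
    simp only [Matrix.trace, Matrix.diag, Matrix.mul_apply]
    exact Finset.sum_congr rfl fun s _ => Finset.sum_congr rfl fun t _ => by rw [hS1 s t]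
  have e2 : (S1 * S2).trace = ∑ s, ∑ t, S1 s t * S2 s t := by
    simp only [Matrix.trace, Matrix.diag, Matrix.mul_apply]
    exact Finset.sum_congr rfl fun s _ => Finset.sum_congr rfl fun t _ => by rw [hS2 s t]
  have e3 : μ1 ⬝ᵥ (S1 *ᵥ μ1) = ∑ s, ∑ t, μ1 s * (S1 s t * μ1 t) := by
    simp [dotProduct, Matrix.mulVec, Finset.mul_sum]
  have e4 : μ1 ⬝ᵥ (S2 *ᵥ μ1) = ∑ s, ∑ t, μ1 s * (S2 s t * μ1 t) := by
    simp [dotProduct, Matrix.mulVec, Finset.mul_sum]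
  have e5 : (μ1 - μ2) ⬝ᵥ (S1 *ᵥ (μ1 - μ2)) = ∑ s, ∑ t, d s * (S1 s t * d t) := by
    simp [dotProduct, Matrix.mulVec, Finset.mul_sum, hd, Pi.sub_apply]
  -- final assembly
  have hgoal' : ∀ ω, x0 ω ⬝ᵥ (((n₁ : ℝ)⁻¹ • ∑ k, X1 k ω) - ((n₂ : ℝ)⁻¹ • ∑ l, X2 l ω))
      = Y ω := by
    intro ω
    simp only [hYdef, hZdef, dotProduct]
  simp only [hgoal']
  rw [hvar, hEY2, hEY]
  calc (∑ s, ∑ t, (S1 s t + μ1 s * μ1 t) * (S1 s t / ↑n₁ + S2 s t / ↑n₂ + d s * d t))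
        - (∑ s, μ1 s * d s)^2
      = ∑ s, ∑ t, (S1 s t * S1 s t / ↑n₁ + S1 s t * S2 s t / ↑n₂
          + μ1 s * (S1 s t * μ1 t) / ↑n₁ + μ1 s * (S2 s t * μ1 t) / ↑n₂
          + d s * (S1 s t * d t)) := by
        rw [sq, Finset.sum_mul_sum, ← Finset.sum_sub_distrib]
        refine Finset.sum_congr rfl fun s _ => ?_
        rw [← Finset.sum_sub_distrib]
        refine Finset.sum_congr rfl fun t _ => ?_
        simp only [hd]
        ring
    _ = (S1 * S1).trace / ↑n₁ + (S1 * S2).trace / ↑n₂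
        + (μ1 ⬝ᵥ (S1 *ᵥ μ1)) / ↑n₁ + (μ1 ⬝ᵥ (S2 *ᵥ μ1)) / ↑n₂
        + (μ1 - μ2) ⬝ᵥ (S1 *ᵥ (μ1 - μ2)) := by
        rw [e1, e2, e3, e4, e5]
        simp_rw [Finset.sum_add_distrib, ← Finset.sum_div]
end
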